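/- Let A be a real k × d matrix, let γ > 0 be real, let x₀ ∈ ℝ^d and y₁ ∈ ℝ^k, and let e denote Euler's number. Then there exists a unique w ∈ ℝ^d satisfying the terminal costate condition w = γ • Aᵀ ⬝ᵥ (A ⬝ᵥ (e • x₀ − ((e² − 1)/2) • w) − y₁); equivalently, w is the unique solution of (1 + (γ(e² − 1)/2) • (Aᵀ * A)) ⬝ᵥ w = γ • (e • ((Aᵀ * A) ⬝ᵥ x₀) − Aᵀ ⬝ᵥ y₁), which is solvable since 1 + (γ(e² − 1)/2) • (Aᵀ * A) is invertible. -/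

import Mathlib

open Matrix

theorem terminal_costate_existence_uniqueness {k d : ℕ} (A : Matrix (Fin k) (Fin d) ℝ)
    (γ : ℝ) (hγ : 0 < γ) (x₀ : Fin d → ℝ) (y₁ : Fin k → ℝ) :
    (∃! w : Fin d → ℝ,
      w = γ • Aᵀ.mulVec (A.mulVec (Real.exp 1 • x₀ - ((Real.exp 1 ^ 2 - 1) / 2) • w) - y₁)) ∧
    (∀ w : Fin d → ℝ,
      w = γ • Aᵀ.mulVec (A.mulVec (Real.exp 1 • x₀ - ((Real.exp 1 ^ 2 - 1) / 2) • w) - y₁) ↔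
      ((1 : Matrix (Fin d) (Fin d) ℝ) + (γ * (Real.exp 1 ^ 2 - 1) / 2) • (Aᵀ * A)).mulVec w
        = γ • (Real.exp 1 • ((Aᵀ * A).mulVec x₀) - Aᵀ.mulVec y₁)) ∧
    IsUnit ((1 : Matrix (Fin d) (Fin d) ℝ) + (γ * (Real.exp 1 ^ 2 - 1) / 2) • (Aᵀ * A)) := by
  set c : ℝ := γ * (Real.exp 1 ^ 2 - 1) / 2 with hc
  have hcpos : 0 ≤ c := by
    have h1 : (1:ℝ) < Real.exp 1 := by
      have := Real.add_one_lt_exp (one_ne_zero); linarith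
    have h2 : (0:ℝ) ≤ Real.exp 1 ^ 2 - 1 := by nlinarith
    rw [hc]; positivity
  set M : Matrix (Fin d) (Fin d) ℝ := (1 : Matrix (Fin d) (Fin d) ℝ) + c • (Aᵀ * A) with hM
  have h0 : (Aᵀ * A).PosSemidef := by
    simpa [conjTranspose_eq_transpose_of_trivial] using
      Matrix.posSemidef_conjTranspose_mul_self A
  have hps : ((c • (Aᵀ * A)) : Matrix (Fin d) (Fin d) ℝ).PosSemidef := by
    refine ⟨?_, fun x => ?_⟩
    · show (c • (Aᵀ * A))ᴴ = c • (Aᵀ * A)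
      rw [conjTranspose_smul]
      simp [h0.1.eq]
    · have := h0.2 x
      convert smul_nonneg hcpos this using 1
      rw [smul_eq_mul, Finsupp.mul_sum]
      refine Finsupp.sum_congr fun i _ => ?_
      rw [Finsupp.mul_sum]
      refine Finsupp.sum_congr fun j _ => ?_
      simp only [Matrix.smul_apply, smul_eq_mul, star_trivial]
      ring
  have hpd : M.PosDef := Matrix.PosDef.one.add_posSemidef hps
  have hu : IsUnit M := hpd.isUnit
  have hiff : ∀ w : Fin d → ℝ,
      w = γ • Aᵀ.mulVec (A.mulVec (Real.exp 1 • x₀ - ((Real.exp 1 ^ 2 - 1) / 2) • w) - y₁) ↔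
      M.mulVec w = γ • (Real.exp 1 • ((Aᵀ * A).mulVec x₀) - Aᵀ.mulVec y₁) := by
    intro w
    have e1 : Aᵀ.mulVec (A.mulVec (Real.exp 1 • x₀ - ((Real.exp 1 ^ 2 - 1) / 2) • w) - y₁)
        = Real.exp 1 • (Aᵀ * A).mulVec x₀ - ((Real.exp 1 ^ 2 - 1) / 2) • (Aᵀ * A).mulVec w
          - Aᵀ.mulVec y₁ := by
      simp [Matrix.mulVec_sub, Matrix.mulVec_smul, ← Matrix.mulVec_mulVec]
    have e2 : M.mulVec w = w + c • (Aᵀ * A).mulVec w := by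
      simp [hM, Matrix.add_mulVec, Matrix.smul_mulVec]
    rw [e1, e2]
    have key : w - γ • (Real.exp 1 • (Aᵀ * A).mulVec x₀
          - ((Real.exp 1 ^ 2 - 1) / 2) • (Aᵀ * A).mulVec w - Aᵀ.mulVec y₁)
        = (w + c • (Aᵀ * A).mulVec w)
          - γ • (Real.exp 1 • (Aᵀ * A).mulVec x₀ - Aᵀ.mulVec y₁) := by
      rw [hc]; module
    constructor
    · intro h
      have := sub_eq_zero.mpr h
      rw [key] at this
      exact sub_eq_zero.mp this
    · intro h
      have := sub_eq_zero.mpr h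
      rw [← key] at this
      exact sub_eq_zero.mp this
  refine ⟨?_, hiff, hu⟩
  have hinj : Function.Injective M.mulVec := mulVec_injective_iff_isUnit.mpr hu
  obtain ⟨N, hN⟩ := hu.exists_left_inv
  have hN' : M * N = 1 := by rwa [mul_eq_one_comm] at hN
  refine ⟨N.mulVec (γ • (Real.exp 1 • ((Aᵀ * A).mulVec x₀) - Aᵀ.mulVec y₁)),
    (hiff _).mpr ?_, fun y hy => ?_⟩
  · rw [Matrix.mulVec_mulVec, hN', Matrix.one_mulVec]
  · have hy' := (hiff y).mp hy
    apply hinj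
    rw [hy', Matrix.mulVec_mulVec, hN', Matrix.one_mulVec]
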